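/- When the participation and treatment models are correctly specified, the inverse-probability weight reproduces target-population averaging: if p(x) := ℙ(R = true | X = x) and e(x) := ℙ(A = a | X = x, R = true), then for every function g : 𝒳 → ℝ, E[ ((1 − p(X(ω))) · 1{R = true, A = a}(ω) / (e(X(ω)) · p(X(ω)))) · g(X(ω)) ] = E[ 1{R = false}(ω) · g(X(ω)) ]. -/

import Mathlib

open Finset

attribute [local instance] Classical.propDecidable

variable {Ω : Type*}

/-- Probability of an event. -/
noncomputable def pr [Fintype Ω] (P : Ω → ℝ) (E : Ω → Prop) : ℝ :=
  ∑ ω, if E ω then P ω else 0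

/-- Expectation of a real random variable. -/
noncomputable def ex [Fintype Ω] (P : Ω → ℝ) (Z : Ω → ℝ) : ℝ :=
  ∑ ω, P ω * Z ω

/-- Conditional probability ℙ(F | E) = ℙ(F ∩ E)/ℙ(E). -/
noncomputable def cpr [Fintype Ω] (P : Ω → ℝ) (F E : Ω → Prop) : ℝ :=
  pr P (fun ω => F ω ∧ E ω) / pr P E

/-- Conditional expectation E[Z | E] = E[Z·1_E]/ℙ(E). -/
noncomputable def cex [Fintype Ω] (P : Ω → ℝ) (Z : Ω → ℝ) (E : Ω → Prop) : ℝ :=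
  (∑ ω, if E ω then P ω * Z ω else 0) / pr P E

lemma pr_congr' [Fintype Ω] (P : Ω → ℝ) {E F : Ω → Prop} (h : ∀ ω, E ω ↔ F ω) :
    pr P E = pr P F := by
  unfold pr; exact Finset.sum_congr rfl fun ω _ => by simp [h ω]

lemma pr_nonneg' [Fintype Ω] (P : Ω → ℝ) (h : ∀ ω, 0 ≤ P ω) (E : Ω → Prop) :
    0 ≤ pr P E :=
  Finset.sum_nonneg fun ω _ => by by_cases hE : E ω <;> simp [hE, h ω]

lemma pr_mono' [Fintype Ω] (P : Ω → ℝ) (h0 : ∀ ω, 0 ≤ P ω) {E F : Ω → Prop}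
    (h : ∀ ω, E ω → F ω) : pr P E ≤ pr P F := by
  apply Finset.sum_le_sum
  intro ω _
  by_cases hE : E ω
  · simp [hE, h ω hE]
  · by_cases hF : F ω <;> simp [hE, hF, h0 ω]

/-- When the participation and treatment models are correctly specified,
the inverse-probability weight reproduces target-population averaging. -/
theorem ip_weight_reproduces_target_average
    {𝒳 𝒯 : Type*} [Fintype Ω] [Fintype 𝒳] [Fintype 𝒯]
    (P : Ω → ℝ) (hP0 : ∀ ω, 0 ≤ P ω) (hP1 : ∑ ω, P ω = 1)
    (X : Ω → 𝒳) (A : Ω → 𝒯) (R : Ω → Bool) (a : 𝒯)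
    -- positivity
    (hpos : ∀ x, 0 < pr P (fun ω => X ω = x) →
      0 < pr P (fun ω => A ω = a ∧ X ω = x ∧ R ω = true))
    -- correctly specified participation and treatment models
    (p e : 𝒳 → ℝ)
    (hp : ∀ x, p x = cpr P (fun ω => R ω = true) (fun ω => X ω = x))
    (he : ∀ x, e x = cpr P (fun ω => A ω = a) (fun ω => X ω = x ∧ R ω = true)) :
    ∀ g : 𝒳 → ℝ,
      ex P (fun ω =>
          ((1 - p (X ω)) * (if R ω = true ∧ A ω = a then (1 : ℝ) else 0)
              / (e (X ω) * p (X ω)))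
            * g (X ω))
        = ex P (fun ω => (if R ω = false then (1 : ℝ) else 0) * g (X ω)) := by
  intro g
  unfold ex
  rw [← Finset.sum_fiberwise_of_maps_to (g := X) (fun ω _ => Finset.mem_univ (X ω)),
      ← Finset.sum_fiberwise_of_maps_to (g := X) (fun ω _ => Finset.mem_univ (X ω))]
  apply Finset.sum_congr rfl
  intro x _
  have hL : ∑ ω ∈ Finset.univ.filter (fun ω => X ω = x),
      P ω * (((1 - p (X ω)) * (if R ω = true ∧ A ω = a then (1 : ℝ) else 0)
              / (e (X ω) * p (X ω))) * g (X ω))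
      = ((1 - p x) / (e x * p x) * g x) *
        pr P (fun ω => R ω = true ∧ A ω = a ∧ X ω = x) := by
    rw [pr, Finset.mul_sum, Finset.sum_filter]
    apply Finset.sum_congr rfl
    intro ω _
    by_cases hx : X ω = x
    · by_cases hra : R ω = true ∧ A ω = a
      · have h3 : R ω = true ∧ A ω = a ∧ X ω = x := ⟨hra.1, hra.2, hx⟩
        simp [hx, hra.1, hra.2]
        ring
      · have h3 : ¬(R ω = true ∧ A ω = a ∧ X ω = x) := by tauto
        simp [hx, hra, h3]
    · have h3 : ¬(R ω = true ∧ A ω = a ∧ X ω = x) := by tauto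
      simp [hx, h3]
  have hR : ∑ ω ∈ Finset.univ.filter (fun ω => X ω = x),
      P ω * ((if R ω = false then (1 : ℝ) else 0) * g (X ω))
      = g x * pr P (fun ω => R ω = false ∧ X ω = x) := by
    rw [pr, Finset.mul_sum, Finset.sum_filter]
    apply Finset.sum_congr rfl
    intro ω _
    by_cases hx : X ω = x
    · by_cases hr : R ω = false
      · simp [hx, hr]
        ring
      · have h3 : ¬(R ω = false ∧ X ω = x) := by tauto
        simp [hx, hr, h3]
    · have h3 : ¬(R ω = false ∧ X ω = x) := by tauto
      simp [hx, h3]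
  rw [hL, hR]
  set q := pr P (fun ω => X ω = x) with hq
  have hqnn : 0 ≤ q := pr_nonneg' P hP0 _
  have hsplit : q = pr P (fun ω => R ω = true ∧ X ω = x)
      + pr P (fun ω => R ω = false ∧ X ω = x) := by
    rw [hq]; unfold pr
    rw [← Finset.sum_add_distrib]
    apply Finset.sum_congr rfl
    intro ω _
    by_cases hx : X ω = x <;> cases hRb : R ω <;> simp [hx, hRb]
  rcases eq_or_lt_of_le hqnn with hq0 | hq0
  · have h1 : pr P (fun ω => R ω = true ∧ A ω = a ∧ X ω = x) = 0 := by
      have hle := pr_mono' P hP0 (E := fun ω => R ω = true ∧ A ω = a ∧ X ω = x)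
        (F := fun ω => X ω = x) (fun ω h => h.2.2)
      have hnn := pr_nonneg' P hP0 (fun ω => R ω = true ∧ A ω = a ∧ X ω = x)
      linarith
    have h2 : pr P (fun ω => R ω = false ∧ X ω = x) = 0 := by
      have hle := pr_mono' P hP0 (E := fun ω => R ω = false ∧ X ω = x)
        (F := fun ω => X ω = x) (fun ω h => h.2)
      have hnn := pr_nonneg' P hP0 (fun ω => R ω = false ∧ X ω = x)
      linarith
    rw [h1, h2]; ring
  · have hA : 0 < pr P (fun ω => A ω = a ∧ X ω = x ∧ R ω = true) := hpos x hq0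
    set prA := pr P (fun ω => A ω = a ∧ X ω = x ∧ R ω = true) with hprA
    have hRx : pr P (fun ω => X ω = x ∧ R ω = true)
        = pr P (fun ω => R ω = true ∧ X ω = x) := pr_congr' P (fun ω => by tauto)
    set prR := pr P (fun ω => R ω = true ∧ X ω = x) with hprR
    have hRpos : 0 < prR := by
      have hle := pr_mono' P hP0 (E := fun ω => A ω = a ∧ X ω = x ∧ R ω = true)
        (F := fun ω => R ω = true ∧ X ω = x) (fun ω h => ⟨h.2.2, h.2.1⟩)
      linarith
    have hpx : p x = prR / q := by
      rw [hp x, cpr]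
    have hex : e x = prA / prR := by
      rw [he x, cpr, hRx]
    have hprA' : pr P (fun ω => R ω = true ∧ A ω = a ∧ X ω = x) = prA :=
      pr_congr' P (fun ω => by tauto)
    have hfalse : pr P (fun ω => R ω = false ∧ X ω = x) = q - prR := by
      linarith
    rw [hprA', hfalse, hpx, hex]
    field_simp
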